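/- (Hardy, subcritical case) For α, β > 0 with αβ < 1 and any d ≥ 0, there exist infinitely many linearly independent functions f ∈ L²(ℝ², ℍ) satisfying |f(x)|_Q ≤ C(1+|x|)^d e^{-πα|x|²} and ‖𝓕{f}(y)‖_Q ≤ C(1+|y|)^d e^{-πβ|y|²}; indeed for any δ with β < 1/δ < 1/α, every function g(x) = R(x) e^{-πδ|x|²} with R a polynomial of degree < d satisfies these conditions. -/

import Mathlib

open MeasureTheory Real

noncomputable section

abbrev ℍ : Type := Quaternion ℝ
def Qi : ℍ := ⟨0,1,0,0⟩
def Qj : ℍ := ⟨0,0,1,0⟩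

/-- e^{iθ} as a quaternion. -/
def expI (θ : ℝ) : ℍ := ⟨Real.cos θ, Real.sin θ, 0, 0⟩
/-- e^{jθ} as a quaternion. -/
def expJ (θ : ℝ) : ℍ := ⟨Real.cos θ, 0, Real.sin θ, 0⟩

/-- The two-sided quaternion Fourier transform. -/
def QFT (f : ℝ × ℝ → ℍ) (ξ : ℝ × ℝ) : ℍ :=
  ∫ x : ℝ × ℝ, expI (-(2 * π * ξ.1 * x.1)) * f x * expJ (-(2 * π * ξ.2 * x.2))

/-- Euclidean norm on ℝ². -/
def enorm2 (x : ℝ × ℝ) : ℝ := Real.sqrt (x.1 ^ 2 + x.2 ^ 2)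

/-- The m-th real component of f, viewed as a quaternion-valued function. -/
def qcomp (f : ℝ × ℝ → ℍ) (m : Fin 4) : ℝ × ℝ → ℍ :=
  fun x => match m with
  | 0 => ((f x).re : ℍ) | 1 => ((f x).imI : ℍ) | 2 => ((f x).imJ : ℍ) | 3 => ((f x).imK : ℍ)

/-- ‖𝓕{f}(ξ)‖_Q := √(Σ_m |𝓕{f_m}(ξ)|_Q²). -/
def QnormF (f : ℝ × ℝ → ℍ) (ξ : ℝ × ℝ) : ℝ :=
  Real.sqrt (∑ m : Fin 4, ‖QFT (qcomp f m) ξ‖ ^ 2)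

/-- A quaternion-coefficient polynomial on ℝ², given by its four real components. -/
def qpoly (c : Fin 4 → MvPolynomial (Fin 2) ℝ) (x : ℝ × ℝ) : ℍ :=
  ⟨MvPolynomial.eval ![x.1, x.2] (c 0), MvPolynomial.eval ![x.1, x.2] (c 1),
   MvPolynomial.eval ![x.1, x.2] (c 2), MvPolynomial.eval ![x.1, x.2] (c 3)⟩

section HardyAux
open scoped FourierTransform

lemma aux_pow_le_exp_sq (ε : ℝ) (hε : 0 < ε) (k : ℕ) :
    ∃ C : ℝ, 0 < C ∧ ∀ x : ℝ, |x| ^ k ≤ C * Real.exp (ε * x ^ 2) := by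
  refine ⟨1 + k.factorial / ε ^ k, by positivity, fun x => ?_⟩
  have hx2 : 0 ≤ ε * x ^ 2 := by positivity
  have hexp : (1:ℝ) ≤ Real.exp (ε * x ^ 2) := Real.one_le_exp hx2
  have hfac : (0:ℝ) ≤ k.factorial / ε ^ k := by positivity
  have hεk : (0:ℝ) < ε ^ k := by positivity
  have hkey : (ε * x ^ 2) ^ k / k.factorial ≤ Real.exp (ε * x ^ 2) := by
    calc (ε * x ^ 2) ^ k / k.factorial
        ≤ ∑ i ∈ Finset.range (k+1), (ε * x ^ 2) ^ i / i.factorial :=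
          Finset.single_le_sum (f := fun i => (ε * x ^ 2) ^ i / (i.factorial : ℝ))
            (fun i _ => by positivity) (Finset.self_mem_range_succ k)
      _ ≤ Real.exp (ε * x ^ 2) := Real.sum_le_exp_of_nonneg hx2 (k+1)
  have hkey' : (ε * x ^ 2) ^ k ≤ k.factorial * Real.exp (ε * x ^ 2) := by
    rw [div_le_iff₀ (by positivity)] at hkey
    linarith [hkey]
  rcases le_total (|x|) 1 with h | h
  · have h1 : |x| ^ k ≤ 1 := pow_le_one₀ (abs_nonneg x) h
    nlinarith
  · have h1 : |x| ^ k ≤ (x ^ 2) ^ k := by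
      calc |x| ^ k ≤ (|x| ^ 2) ^ k := by
            rw [← pow_mul]
            exact pow_le_pow_right₀ h (by omega)
        _ = (x ^ 2) ^ k := by rw [sq_abs]
    have h2 : (x ^ 2) ^ k ≤ k.factorial / ε ^ k * Real.exp (ε * x ^ 2) := by
      rw [div_mul_eq_mul_div, le_div_iff₀ hεk]
      calc (x ^ 2) ^ k * ε ^ k = (ε * x ^ 2) ^ k := by rw [mul_pow]; ring
        _ ≤ ↑k.factorial * rexp (ε * x ^ 2) := hkey'
    nlinarith


lemma aux_cpoly_bound (P : Polynomial ℂ) (ε : ℝ) (hε : 0 < ε) :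
    ∃ C : ℝ, 0 < C ∧ ∀ x : ℝ, ‖P.eval (x : ℂ)‖ ≤ C * Real.exp (ε * x ^ 2) := by
  choose Cf hCfpos hCf using fun k => aux_pow_le_exp_sq ε hε k
  set N := P.natDegree + 1
  have hs0 : (0:ℝ) ≤ ∑ i ∈ Finset.range N, ‖P.coeff i‖ * Cf i :=
    Finset.sum_nonneg fun i _ => mul_nonneg (norm_nonneg _) (hCfpos i).le
  refine ⟨∑ i ∈ Finset.range N, ‖P.coeff i‖ * Cf i + 1, by linarith, fun x => ?_⟩
  have hexp : (0:ℝ) < Real.exp (ε * x ^ 2) := Real.exp_pos _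
  have h1 : ‖P.eval (x : ℂ)‖ ≤ ∑ i ∈ Finset.range N, ‖P.coeff i‖ * |x| ^ i := by
    rw [Polynomial.eval_eq_sum_range]
    refine (norm_sum_le _ _).trans ?_
    refine Finset.sum_le_sum fun i _ => ?_
    rw [norm_mul, norm_pow, Complex.norm_real]
    exact le_of_eq rfl
  refine h1.trans ?_
  have h2 : ∑ i ∈ Finset.range N, ‖P.coeff i‖ * |x| ^ i
      ≤ ∑ i ∈ Finset.range N, ‖P.coeff i‖ * Cf i * Real.exp (ε * x ^ 2) := by
    refine Finset.sum_le_sum fun i _ => ?_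
    rw [mul_assoc]
    exact mul_le_mul_of_nonneg_left (hCf i x) (norm_nonneg _)
  refine h2.trans ?_
  rw [← Finset.sum_mul]
  nlinarith [Finset.sum_nonneg (fun i (_ : i ∈ Finset.range N) =>
    mul_nonneg (norm_nonneg (P.coeff i)) (hCfpos i).le)]

lemma aux_mvpoly_bound (p : MvPolynomial (Fin 2) ℝ) (ε : ℝ) (hε : 0 < ε) :
    ∃ C : ℝ, 0 < C ∧ ∀ x : ℝ × ℝ,
      |MvPolynomial.eval ![x.1, x.2] p| ≤ C * Real.exp (ε * (x.1 ^ 2 + x.2 ^ 2)) := by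
  choose Cf hCfpos hCf using fun k => aux_pow_le_exp_sq ε hε k
  have hs0 : (0:ℝ) ≤ ∑ s ∈ p.support, |MvPolynomial.coeff s p| * Cf (s 0) * Cf (s 1) :=
    Finset.sum_nonneg fun s _ => mul_nonneg (mul_nonneg (abs_nonneg _) (hCfpos (s 0)).le)
      (hCfpos (s 1)).le
  refine ⟨∑ s ∈ p.support, |MvPolynomial.coeff s p| * Cf (s 0) * Cf (s 1) + 1,
    by linarith, fun x => ?_⟩
  have hexp : (0:ℝ) < Real.exp (ε * (x.1 ^ 2 + x.2 ^ 2)) := Real.exp_pos _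
  have h1 : |MvPolynomial.eval ![x.1, x.2] p|
      ≤ ∑ s ∈ p.support, |MvPolynomial.coeff s p| * (|x.1| ^ (s 0) * |x.2| ^ (s 1)) := by
    rw [MvPolynomial.eval_eq']
    refine (Finset.abs_sum_le_sum_abs _ _).trans ?_
    refine Finset.sum_le_sum fun s _ => ?_
    rw [abs_mul]
    refine mul_le_mul_of_nonneg_left ?_ (abs_nonneg _)
    rw [Fin.prod_univ_two]
    simp only [Matrix.cons_val_zero, Matrix.cons_val_one, Matrix.head_cons]
    rw [abs_mul, abs_pow, abs_pow]
  refine h1.trans ?_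
  have h2 : ∀ s ∈ p.support, |MvPolynomial.coeff s p| * (|x.1| ^ (s 0) * |x.2| ^ (s 1))
      ≤ |MvPolynomial.coeff s p| * Cf (s 0) * Cf (s 1) * Real.exp (ε * (x.1 ^ 2 + x.2 ^ 2)) := by
    intro s _
    have b1 := hCf (s 0) x.1
    have b2 := hCf (s 1) x.2
    have e : Real.exp (ε * x.1 ^ 2) * Real.exp (ε * x.2 ^ 2)
        = Real.exp (ε * (x.1 ^ 2 + x.2 ^ 2)) := by
      rw [← Real.exp_add]; ring_nf
    calc |MvPolynomial.coeff s p| * (|x.1| ^ (s 0) * |x.2| ^ (s 1))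
        ≤ |MvPolynomial.coeff s p| * ((Cf (s 0) * Real.exp (ε * x.1 ^ 2)) *
            (Cf (s 1) * Real.exp (ε * x.2 ^ 2))) := by
          refine mul_le_mul_of_nonneg_left ?_ (abs_nonneg _)
          exact mul_le_mul b1 b2 (pow_nonneg (abs_nonneg _) _)
            (mul_nonneg (hCfpos (s 0)).le (Real.exp_pos _).le)
      _ = |MvPolynomial.coeff s p| * Cf (s 0) * Cf (s 1) *
            (Real.exp (ε * x.1 ^ 2) * Real.exp (ε * x.2 ^ 2)) := by ring
      _ = _ := by rw [e]
  refine (Finset.sum_le_sum h2).trans ?_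
  rw [← Finset.sum_mul]
  nlinarith [Finset.sum_nonneg (fun s (_ : s ∈ p.support) =>
    mul_nonneg (mul_nonneg (abs_nonneg (MvPolynomial.coeff s p)) (hCfpos (s 0)).le) (hCfpos (s 1)).le)]


def cg (δ : ℝ) (n : ℕ) : ℝ → ℂ :=
  fun x => (x : ℂ) ^ n * Complex.exp (-(π * δ : ℝ) * (x : ℂ) ^ 2)

lemma norm_cg (δ : ℝ) (n : ℕ) (x : ℝ) :
    ‖cg δ n x‖ = |x| ^ n * Real.exp (-(π * δ) * x ^ 2) := by
  rw [cg, norm_mul, norm_pow, Complex.norm_real, Real.norm_eq_abs,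
    norm_cexp_neg_mul_sq]
  norm_num

lemma cg_cont (δ : ℝ) (n : ℕ) : Continuous (cg δ n) := by
  unfold cg
  fun_prop

lemma integrable_aux_gauss (b : ℝ) (hb : 0 < b) (n : ℕ) :
    Integrable (fun x : ℝ => |x| ^ n * Real.exp (-b * x ^ 2)) := by
  obtain ⟨C, hC, hCb⟩ := aux_pow_le_exp_sq (b / 2) (by linarith) n
  refine (((integrable_exp_neg_mul_sq (show (0:ℝ) < b/2 by linarith)).const_mul C).mono'
    ?_ ?_)
  · exact (((_root_.continuous_abs.pow n)).mul
      (((continuous_const.mul (continuous_pow 2)).rexp))).aestronglyMeasurable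
  · refine Filter.Eventually.of_forall fun x => ?_
    rw [Real.norm_eq_abs, abs_mul, _root_.abs_of_nonneg (Real.exp_pos _).le]
    rw [abs_pow, abs_abs]
    calc |x| ^ n * Real.exp (-b * x ^ 2)
        ≤ C * Real.exp (b / 2 * x ^ 2) * Real.exp (-b * x ^ 2) :=
          mul_le_mul_of_nonneg_right (hCb x) (Real.exp_pos _).le
      _ = C * Real.exp (-(b / 2) * x ^ 2) := by
          rw [mul_assoc, ← Real.exp_add]; ring_nf

lemma integrable_cg (δ : ℝ) (hδ : 0 < δ) (n : ℕ) : Integrable (cg δ n) := by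
  refine (integrable_aux_gauss (π * δ) (by positivity) n).mono'
    (cg_cont δ n).aestronglyMeasurable ?_
  refine Filter.Eventually.of_forall fun x => ?_
  rw [norm_cg]

lemma ft_cg (δ : ℝ) (hδ : 0 < δ) (n : ℕ) :
    ∃ P : Polynomial ℂ, ∀ ξ : ℝ,
      𝓕 (cg δ n) ξ = P.eval (ξ : ℂ) * Complex.exp (-(π / δ : ℝ) * (ξ : ℂ) ^ 2) := by
  induction n with
  | zero =>
    refine ⟨Polynomial.C (1 / (δ : ℂ) ^ (1 / 2 : ℂ)), fun ξ => ?_⟩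
    have h0 : cg δ 0 = fun x : ℝ => Complex.exp (-π * δ * (x:ℂ) ^ 2) := by
      funext x; simp only [cg, pow_zero, one_mul]; norm_num
    rw [h0, fourier_gaussian_pi (by simpa using hδ)]
    simp only [Polynomial.eval_C]
    congr 1
    push_cast
    ring_nf
  | succ n ih =>
    obtain ⟨P, hP⟩ := ih
    have hder : deriv (𝓕 (cg δ n)) = 𝓕 (fun x : ℝ => (-2 * π * Complex.I * x) • cg δ n x) := by
      apply Real.deriv_fourier (integrable_cg δ hδ n)
      have : (fun x : ℝ => x • cg δ n x) = cg δ (n + 1) := by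
        funext x; simp [cg, pow_succ]; ring
      rw [this]; exact integrable_cg δ hδ (n + 1)
    have hsm : (fun x : ℝ => (-2 * π * Complex.I * x) • cg δ n x)
        = fun x => (-2 * π * Complex.I) • cg δ (n + 1) x := by
      funext x; simp [cg, smul_eq_mul, pow_succ]; ring
    have hconst : 𝓕 (fun x => (-2 * π * Complex.I) • cg δ (n + 1) x)
        = fun ξ => (-2 * π * Complex.I) • 𝓕 (cg δ (n + 1)) ξ := by
      funext ξ
      rw [Real.fourier_real_eq, Real.fourier_real_eq]
      rw [← integral_smul]
      congr 1; funext v; rw [smul_comm]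
    have hne : (-2 * π * Complex.I) ≠ 0 := by
      simp [Complex.ext_iff, Real.pi_ne_zero]
    have key : ∀ ξ : ℝ, 𝓕 (cg δ (n+1)) ξ = (-2 * π * Complex.I)⁻¹ * deriv (𝓕 (cg δ n)) ξ := by
      intro ξ
      have hd2 : deriv (𝓕 (cg δ n)) ξ = (-2 * π * Complex.I) * 𝓕 (cg δ (n+1)) ξ := by
        rw [hder, hsm, hconst]; simp [smul_eq_mul]
      rw [hd2, inv_mul_cancel_left₀ hne]
    -- compute deriv of P.eval * gaussian
    set c : ℝ := π / δ with hc
    have hFn : 𝓕 (cg δ n) = fun ξ : ℝ => P.eval (ξ:ℂ) * Complex.exp (-(c:ℝ) * (ξ:ℂ)^2) := by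
      funext ξ; exact hP ξ
    have hderiv : ∀ ξ : ℝ, deriv (𝓕 (cg δ n)) ξ =
        (P.derivative.eval (ξ:ℂ) + (-2 * c) * ξ * P.eval (ξ:ℂ)) *
          Complex.exp (-(c:ℝ) * (ξ:ℂ)^2) := by
      intro ξ
      rw [hFn]
      have hE : HasDerivAt (fun z : ℂ => Complex.exp (-(c:ℝ) * z ^ 2))
          (Complex.exp (-(c:ℝ) * (ξ:ℂ)^2) * (-(c:ℝ) * (2 * (ξ:ℂ) ^ 1))) (ξ:ℂ) := by
        exact (((hasDerivAt_pow 2 (ξ:ℂ)).const_mul (-(c:ℝ) : ℂ)).cexp).congr_deriv (by norm_num)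
      have hPd : HasDerivAt (fun z : ℂ => P.eval z) (P.derivative.eval (ξ:ℂ)) (ξ:ℂ) :=
        P.hasDerivAt (ξ:ℂ)
      have hmul := hPd.mul hE
      have := hmul.comp_ofReal
      rw [show (fun ξ : ℝ => P.eval (ξ:ℂ) * Complex.exp (-(c:ℝ) * (ξ:ℂ)^2)) = (fun y : ℝ => ((fun z : ℂ => P.eval z) * fun z : ℂ => Complex.exp (-(c:ℝ) * z ^ 2)) (y:ℂ)) from rfl, this.deriv]
      push_cast
      ring
    refine ⟨Polynomial.C (-2 * π * Complex.I)⁻¹ *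
      (P.derivative + Polynomial.C (-2 * (c:ℂ)) * (Polynomial.X * P)), fun ξ => ?_⟩
    rw [key ξ, hderiv ξ]
    simp only [Polynomial.eval_mul, Polynomial.eval_C, Polynomial.eval_add, Polynomial.eval_X]
    push_cast
    ring


/-- real polynomial-Gaussian -/
def rg (δ : ℝ) (n : ℕ) : ℝ → ℝ := fun x => x ^ n * Real.exp (-(π * δ) * x ^ 2)

lemma rg_cont (δ : ℝ) (n : ℕ) : Continuous (rg δ n) := by unfold rg; fun_prop

lemma integrable_rg (δ : ℝ) (hδ : 0 < δ) (n : ℕ) : Integrable (rg δ n) := by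
  refine (integrable_aux_gauss (π * δ) (by positivity) n).mono'
    (rg_cont δ n).aestronglyMeasurable ?_
  refine Filter.Eventually.of_forall fun x => ?_
  rw [rg, Real.norm_eq_abs, abs_mul, _root_.abs_of_nonneg (Real.exp_pos _).le, abs_pow]

lemma ft_cg_bound (δ β : ℝ) (hδ : 0 < δ) (hβ : 0 < β) (hβδ : β < 1 / δ) (n : ℕ) :
    ∃ C : ℝ, 0 < C ∧ ∀ ξ : ℝ, ‖𝓕 (cg δ n) ξ‖ ≤ C * Real.exp (-(π * β) * ξ ^ 2) := by
  obtain ⟨P, hP⟩ := ft_cg δ hδ n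
  have hε : 0 < π * (1 / δ - β) := by
    have := Real.pi_pos; nlinarith
  obtain ⟨C, hC, hCb⟩ := aux_cpoly_bound P (π * (1 / δ - β)) hε
  refine ⟨C, hC, fun ξ => ?_⟩
  rw [hP ξ, norm_mul, norm_cexp_neg_mul_sq, Complex.ofReal_re]
  calc ‖P.eval (ξ:ℂ)‖ * Real.exp (-(π / δ) * ξ ^ 2)
      ≤ C * Real.exp (π * (1 / δ - β) * ξ ^ 2) * Real.exp (-(π / δ) * ξ ^ 2) :=
        mul_le_mul_of_nonneg_right (hCb ξ) (Real.exp_pos _).le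
    _ = C * Real.exp (-(π * β) * ξ ^ 2) := by
        rw [mul_assoc, ← Real.exp_add]
        congr 2
        field_simp
        ring

lemma re_ft (δ : ℝ) (hδ : 0 < δ) (n : ℕ) (ξ : ℝ) :
    (𝓕 (cg δ n) ξ).re = ∫ x : ℝ, Real.cos (2 * π * ξ * x) * rg δ n x := by
  have hint : Integrable (fun x : ℝ => Complex.exp (↑(-2 * π * x * ξ) * Complex.I) • cg δ n x) := by
    refine ((integrable_cg δ hδ n).bdd_mul (c := 1) ?_ (Filter.Eventually.of_forall fun x => ?_))
    · exact (Complex.continuous_exp.comp (by fun_prop)).aestronglyMeasurable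
    · rw [Complex.norm_exp_ofReal_mul_I]
  rw [Real.fourier_real_eq_integral_exp_smul]
  have := (Complex.reCLM.integral_comp_comm hint).symm
  simp only [Complex.reCLM_apply] at this
  rw [this]
  refine integral_congr_ae (Filter.Eventually.of_forall fun x => ?_)
  have hcg : cg δ n x = ((rg δ n x : ℝ) : ℂ) := by
    rw [cg, rg]
    push_cast
    ring
  simp only []
  rw [hcg, smul_eq_mul]
  simp only [Complex.mul_re, Complex.exp_ofReal_mul_I_re, Complex.exp_ofReal_mul_I_im,
    Complex.ofReal_re, Complex.ofReal_im, mul_zero, sub_zero]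
  rw [show -2 * π * x * ξ = -(2 * π * ξ * x) by ring, Real.cos_neg]

lemma im_ft (δ : ℝ) (hδ : 0 < δ) (n : ℕ) (ξ : ℝ) :
    (𝓕 (cg δ n) ξ).im = -∫ x : ℝ, Real.sin (2 * π * ξ * x) * rg δ n x := by
  have hint : Integrable (fun x : ℝ => Complex.exp (↑(-2 * π * x * ξ) * Complex.I) • cg δ n x) := by
    refine ((integrable_cg δ hδ n).bdd_mul (c := 1) ?_ (Filter.Eventually.of_forall fun x => ?_))
    · exact (Complex.continuous_exp.comp (by fun_prop)).aestronglyMeasurable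
    · rw [Complex.norm_exp_ofReal_mul_I]
  rw [Real.fourier_real_eq_integral_exp_smul]
  have := (Complex.imCLM.integral_comp_comm hint).symm
  simp only [Complex.imCLM_apply] at this
  rw [this, ← integral_neg]
  refine integral_congr_ae (Filter.Eventually.of_forall fun x => ?_)
  have hcg : cg δ n x = ((rg δ n x : ℝ) : ℂ) := by
    rw [cg, rg]; push_cast; ring
  simp only []
  rw [hcg, smul_eq_mul]
  simp only [Complex.mul_im, Complex.exp_ofReal_mul_I_re, Complex.exp_ofReal_mul_I_im,
    Complex.ofReal_re, Complex.ofReal_im, mul_zero, zero_add]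
  rw [show -2 * π * x * ξ = -(2 * π * ξ * x) by ring, Real.sin_neg]
  ring

/-- trig selector -/
def trig (b : Bool) : ℝ → ℝ := fun θ => if b then Real.cos θ else Real.sin θ

lemma trig_cont (b : Bool) : Continuous (trig b) := by
  cases b
  · exact Real.continuous_sin
  · exact Real.continuous_cos

lemma trig_abs_le (b : Bool) (θ : ℝ) : |trig b θ| ≤ 1 := by
  cases b <;> simp [trig, Real.abs_cos_le_one, Real.abs_sin_le_one]

lemma trig_integral_bound (δ β : ℝ) (hδ : 0 < δ) (hβ : 0 < β) (hβδ : β < 1 / δ) (n : ℕ)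
    (b : Bool) :
    ∃ C : ℝ, 0 < C ∧ ∀ ξ : ℝ,
      |∫ x : ℝ, trig b (2 * π * ξ * x) * rg δ n x| ≤ C * Real.exp (-(π * β) * ξ ^ 2) := by
  obtain ⟨C, hC, hCb⟩ := ft_cg_bound δ β hδ hβ hβδ n
  refine ⟨C, hC, fun ξ => ?_⟩
  cases b
  · simp only [trig, if_neg Bool.false_ne_true]
    calc |∫ x : ℝ, Real.sin (2 * π * ξ * x) * rg δ n x|
        = |(𝓕 (cg δ n) ξ).im| := by rw [im_ft δ hδ n ξ, abs_neg]
      _ ≤ ‖𝓕 (cg δ n) ξ‖ := Complex.abs_im_le_norm _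
      _ ≤ C * Real.exp (-(π * β) * ξ ^ 2) := hCb ξ
  · simp only [trig, if_pos rfl]
    calc |∫ x : ℝ, Real.cos (2 * π * ξ * x) * rg δ n x|
        = |(𝓕 (cg δ n) ξ).re| := by rw [re_ft δ hδ n ξ]
      _ ≤ ‖𝓕 (cg δ n) ξ‖ := Complex.abs_re_le_norm _
      _ ≤ C * Real.exp (-(π * β) * ξ ^ 2) := hCb ξ


def gauss2 (δ : ℝ) : ℝ × ℝ → ℝ := fun x => Real.exp (-(π * δ) * (x.1 ^ 2 + x.2 ^ 2))
def evp (p : MvPolynomial (Fin 2) ℝ) : ℝ × ℝ → ℝ := fun x => MvPolynomial.eval ![x.1, x.2] p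

lemma gauss2_cont (δ : ℝ) : Continuous (gauss2 δ) := by unfold gauss2; fun_prop

lemma evp_cont (p : MvPolynomial (Fin 2) ℝ) : Continuous (evp p) := by
  unfold evp
  exact p.continuous_eval.comp
    (continuous_pi fun i => by fin_cases i <;> simp <;> [exact continuous_fst; exact continuous_snd])

lemma integrable_evp_gauss2 (δ : ℝ) (hδ : 0 < δ) (p : MvPolynomial (Fin 2) ℝ) :
    Integrable (fun x : ℝ × ℝ => evp p x * gauss2 δ x) := by
  obtain ⟨C, hC, hCb⟩ := aux_mvpoly_bound p (π * δ / 2) (by positivity)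
  have hg : Integrable (fun x : ℝ × ℝ =>
      C * (Real.exp (-(π * δ / 2) * x.1 ^ 2) * Real.exp (-(π * δ / 2) * x.2 ^ 2))) := by
    rw [Measure.volume_eq_prod]
    exact ((integrable_exp_neg_mul_sq (show (0:ℝ) < π * δ / 2 by positivity)).mul_prod
      (integrable_exp_neg_mul_sq (show (0:ℝ) < π * δ / 2 by positivity))).const_mul C
  refine hg.mono' ((evp_cont p).mul (gauss2_cont δ)).aestronglyMeasurable
    (Filter.Eventually.of_forall fun x => ?_)
  rw [Real.norm_eq_abs, abs_mul, gauss2, _root_.abs_of_nonneg (Real.exp_pos _).le]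
  calc |evp p x| * Real.exp (-(π * δ) * (x.1 ^ 2 + x.2 ^ 2))
      ≤ C * Real.exp (π * δ / 2 * (x.1 ^ 2 + x.2 ^ 2)) *
          Real.exp (-(π * δ) * (x.1 ^ 2 + x.2 ^ 2)) :=
        mul_le_mul_of_nonneg_right (hCb x) (Real.exp_pos _).le
    _ = C * (Real.exp (-(π * δ / 2) * x.1 ^ 2) * Real.exp (-(π * δ / 2) * x.2 ^ 2)) := by
        rw [mul_assoc, ← Real.exp_add, ← Real.exp_add]
        congr 2
        ring

lemma integrable_tp (δ : ℝ) (hδ : 0 < δ) (p : MvPolynomial (Fin 2) ℝ) (ξ : ℝ × ℝ)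
    (b₁ b₂ : Bool) :
    Integrable (fun x : ℝ × ℝ =>
      trig b₁ (2 * π * ξ.1 * x.1) * trig b₂ (2 * π * ξ.2 * x.2) * (evp p x * gauss2 δ x)) := by
  refine (integrable_evp_gauss2 δ hδ p).bdd_mul (c := 1) ?_ (Filter.Eventually.of_forall fun x => ?_)
  · exact (((trig_cont b₁).comp (by fun_prop)).mul ((trig_cont b₂).comp (by fun_prop))).aestronglyMeasurable
  · rw [Real.norm_eq_abs, abs_mul]
    exact mul_le_one₀ (trig_abs_le _ _) (abs_nonneg _) (trig_abs_le _ _)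

lemma trig2_bound (δ β : ℝ) (hδ : 0 < δ) (hβ : 0 < β) (hβδ : β < 1 / δ)
    (p : MvPolynomial (Fin 2) ℝ) (b₁ b₂ : Bool) :
    ∃ C : ℝ, 0 < C ∧ ∀ ξ : ℝ × ℝ,
      |∫ x : ℝ × ℝ, trig b₁ (2 * π * ξ.1 * x.1) * trig b₂ (2 * π * ξ.2 * x.2) *
          (evp p x * gauss2 δ x)| ≤ C * Real.exp (-(π * β) * (ξ.1 ^ 2 + ξ.2 ^ 2)) := by
  induction p using MvPolynomial.induction_on' with
  | monomial u a =>
    obtain ⟨C1, hC1, hC1b⟩ := trig_integral_bound δ β hδ hβ hβδ (u 0) b₁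
    obtain ⟨C2, hC2, hC2b⟩ := trig_integral_bound δ β hδ hβ hβδ (u 1) b₂
    refine ⟨C1 * ((|a| + 1) * C2), by positivity, fun ξ => ?_⟩
    have hev : ∀ x : ℝ × ℝ, evp (MvPolynomial.monomial u a) x = a * (x.1 ^ u 0 * x.2 ^ u 1) := by
      intro x
      rw [evp, MvPolynomial.eval_monomial, Finsupp.prod_pow, Fin.prod_univ_two]
      simp
    have hfact : (∫ x : ℝ × ℝ, trig b₁ (2 * π * ξ.1 * x.1) * trig b₂ (2 * π * ξ.2 * x.2) *
          (evp (MvPolynomial.monomial u a) x * gauss2 δ x))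
        = (∫ x : ℝ, trig b₁ (2 * π * ξ.1 * x) * rg δ (u 0) x) *
          (a * ∫ x : ℝ, trig b₂ (2 * π * ξ.2 * x) * rg δ (u 1) x) := by
      rw [← integral_const_mul, ← integral_prod_mul, ← Measure.volume_eq_prod]
      refine integral_congr_ae (Filter.Eventually.of_forall fun x => ?_)
      simp only []
      rw [hev x, gauss2, rg, rg,
        show -(π * δ) * (x.1 ^ 2 + x.2 ^ 2) = -(π * δ) * x.1 ^ 2 + -(π * δ) * x.2 ^ 2 by ring,
        Real.exp_add]
      ring
    rw [hfact, abs_mul, abs_mul]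
    calc |∫ x : ℝ, trig b₁ (2 * π * ξ.1 * x) * rg δ (u 0) x| *
          (|a| * |∫ x : ℝ, trig b₂ (2 * π * ξ.2 * x) * rg δ (u 1) x|)
        ≤ (C1 * Real.exp (-(π * β) * ξ.1 ^ 2)) *
          ((|a| + 1) * (C2 * Real.exp (-(π * β) * ξ.2 ^ 2))) := by
          refine mul_le_mul (hC1b ξ.1) ?_ (by positivity) (by positivity)
          refine mul_le_mul (by linarith [abs_nonneg a]) (hC2b ξ.2) (abs_nonneg _) (by positivity)
      _ = C1 * ((|a| + 1) * C2) * (Real.exp (-(π * β) * ξ.1 ^ 2) * Real.exp (-(π * β) * ξ.2 ^ 2)) := by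
          ring
      _ = C1 * ((|a| + 1) * C2) * Real.exp (-(π * β) * (ξ.1 ^ 2 + ξ.2 ^ 2)) := by
          rw [← Real.exp_add]; congr 2; ring
  | add p q ihp ihq =>
    obtain ⟨Cp, hCp, hCpb⟩ := ihp
    obtain ⟨Cq, hCq, hCqb⟩ := ihq
    refine ⟨Cp + Cq, by positivity, fun ξ => ?_⟩
    have hsplit : (∫ x : ℝ × ℝ, trig b₁ (2 * π * ξ.1 * x.1) * trig b₂ (2 * π * ξ.2 * x.2) *
          (evp (p + q) x * gauss2 δ x))
        = (∫ x : ℝ × ℝ, trig b₁ (2 * π * ξ.1 * x.1) * trig b₂ (2 * π * ξ.2 * x.2) *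
            (evp p x * gauss2 δ x))
          + ∫ x : ℝ × ℝ, trig b₁ (2 * π * ξ.1 * x.1) * trig b₂ (2 * π * ξ.2 * x.2) *
            (evp q x * gauss2 δ x) := by
      rw [← integral_add (integrable_tp δ hδ p ξ b₁ b₂) (integrable_tp δ hδ q ξ b₁ b₂)]
      refine integral_congr_ae (Filter.Eventually.of_forall fun x => ?_)
      simp only [evp, MvPolynomial.eval_add]
      ring
    rw [hsplit]
    calc _ ≤ |∫ x : ℝ × ℝ, trig b₁ (2 * π * ξ.1 * x.1) * trig b₂ (2 * π * ξ.2 * x.2) *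
            (evp p x * gauss2 δ x)|
          + |∫ x : ℝ × ℝ, trig b₁ (2 * π * ξ.1 * x.1) * trig b₂ (2 * π * ξ.2 * x.2) *
            (evp q x * gauss2 δ x)| := abs_add_le _ _
      _ ≤ Cp * Real.exp (-(π * β) * (ξ.1 ^ 2 + ξ.2 ^ 2))
          + Cq * Real.exp (-(π * β) * (ξ.1 ^ 2 + ξ.2 ^ 2)) := add_le_add (hCpb ξ) (hCqb ξ)
      _ = (Cp + Cq) * Real.exp (-(π * β) * (ξ.1 ^ 2 + ξ.2 ^ 2)) := by ring


def Qk : ℍ := ⟨0,0,0,1⟩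

lemma qnorm_eq (q : ℍ) : ‖q‖ = Real.sqrt (q.re^2 + q.imI^2 + q.imJ^2 + q.imK^2) := by
  rw [← Quaternion.normSq_def', Quaternion.normSq_eq_norm_mul_self]
  exact (Real.sqrt_mul_self (norm_nonneg q)).symm

lemma norm_Qi : ‖Qi‖ = 1 := by rw [qnorm_eq]; simp [Qi]
lemma norm_Qj : ‖Qj‖ = 1 := by rw [qnorm_eq]; simp [Qj]
lemma norm_Qk : ‖Qk‖ = 1 := by rw [qnorm_eq]; simp [Qk]

lemma QFT_scalar_bound (δ β : ℝ) (hδ : 0 < δ) (hβ : 0 < β) (hβδ : β < 1 / δ)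
    (p : MvPolynomial (Fin 2) ℝ) :
    ∃ C : ℝ, 0 < C ∧ ∀ ξ : ℝ × ℝ,
      ‖QFT (fun x => ((evp p x * gauss2 δ x : ℝ) : ℍ)) ξ‖
        ≤ C * Real.exp (-(π * β) * (ξ.1 ^ 2 + ξ.2 ^ 2)) := by
  obtain ⟨C1, hC1, hC1b⟩ := trig2_bound δ β hδ hβ hβδ p true true
  obtain ⟨C2, hC2, hC2b⟩ := trig2_bound δ β hδ hβ hβδ p false true
  obtain ⟨C3, hC3, hC3b⟩ := trig2_bound δ β hδ hβ hβδ p true false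
  obtain ⟨C4, hC4, hC4b⟩ := trig2_bound δ β hδ hβ hβδ p false false
  refine ⟨C1 + C2 + C3 + C4, by positivity, fun ξ => ?_⟩
  set r : ℝ × ℝ → ℝ := fun x => evp p x * gauss2 δ x with hr
  set A : ℝ × ℝ → ℝ := fun x => trig true (2 * π * ξ.1 * x.1) * trig true (2 * π * ξ.2 * x.2) * r x with hA
  set B : ℝ × ℝ → ℝ := fun x => -(trig false (2 * π * ξ.1 * x.1) * trig true (2 * π * ξ.2 * x.2) * r x) with hB
  set Cc : ℝ × ℝ → ℝ := fun x => -(trig true (2 * π * ξ.1 * x.1) * trig false (2 * π * ξ.2 * x.2) * r x) with hCc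
  set D : ℝ × ℝ → ℝ := fun x => trig false (2 * π * ξ.1 * x.1) * trig false (2 * π * ξ.2 * x.2) * r x with hD
  have iA : Integrable A := integrable_tp δ hδ p ξ true true
  have iB : Integrable B := by
    have := (integrable_tp δ hδ p ξ false true).neg
    exact this
  have iC : Integrable Cc := by
    have := (integrable_tp δ hδ p ξ true false).neg
    exact this
  have iD : Integrable D := integrable_tp δ hδ p ξ false false
  have key : QFT (fun x => ((r x : ℝ) : ℍ)) ξ
      = (∫ x, A x) • (1:ℍ) + ((∫ x, B x) • Qi + ((∫ x, Cc x) • Qj + (∫ x, D x) • Qk)) := by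
    calc QFT (fun x => ((r x : ℝ) : ℍ)) ξ
        = ∫ x : ℝ × ℝ, (A x • (1:ℍ) + (B x • Qi + (Cc x • Qj + D x • Qk))) := by
          rw [QFT]
          refine integral_congr_ae (Filter.Eventually.of_forall fun x => ?_)
          simp only [hA, hB, hCc, hD, trig, if_pos rfl, if_neg Bool.false_ne_true]
          apply Quaternion.ext <;>
            simp only [Quaternion.re_mul, Quaternion.imI_mul, Quaternion.imJ_mul, Quaternion.imK_mul, Quaternion.re_add, Quaternion.imI_add, Quaternion.imJ_add, Quaternion.imK_add, Quaternion.re_smul, Quaternion.imI_smul, Quaternion.imJ_smul, Quaternion.imK_smul] <;>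
            simp [expI, expJ, Qi, Qj, Qk, Quaternion.re_mul, Quaternion.imI_mul,
              Quaternion.imJ_mul, Quaternion.imK_mul, Real.cos_neg, Real.sin_neg, Quaternion.re_one, Quaternion.imI_one, Quaternion.imJ_one, Quaternion.imK_one] <;>
            ring
      _ = _ := by
          have i1 : Integrable (fun x : ℝ × ℝ => A x • (1:ℍ)) := iA.smul_const 1
          have i2 : Integrable (fun x : ℝ × ℝ => B x • Qi) := iB.smul_const Qi
          have i3 : Integrable (fun x : ℝ × ℝ => Cc x • Qj) := iC.smul_const Qj
          have i4 : Integrable (fun x : ℝ × ℝ => D x • Qk) := iD.smul_const Qk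
          have i34 : Integrable (fun x : ℝ × ℝ => Cc x • Qj + D x • Qk) := i3.add i4
          have i234 : Integrable (fun x : ℝ × ℝ => B x • Qi + (Cc x • Qj + D x • Qk)) :=
            i2.add i34
          rw [integral_add i1 i234, integral_add i2 i34, integral_add i3 i4,
            integral_smul_const, integral_smul_const, integral_smul_const, integral_smul_const]
  rw [key]
  have hBint : |∫ x, B x| ≤ C2 * Real.exp (-(π * β) * (ξ.1 ^ 2 + ξ.2 ^ 2)) := by
    rw [hB, integral_neg, abs_neg]; exact hC2b ξ
  have hCint : |∫ x, Cc x| ≤ C3 * Real.exp (-(π * β) * (ξ.1 ^ 2 + ξ.2 ^ 2)) := by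
    rw [hCc, integral_neg, abs_neg]; exact hC3b ξ
  have hAint : |∫ x, A x| ≤ C1 * Real.exp (-(π * β) * (ξ.1 ^ 2 + ξ.2 ^ 2)) := hC1b ξ
  have hDint : |∫ x, D x| ≤ C4 * Real.exp (-(π * β) * (ξ.1 ^ 2 + ξ.2 ^ 2)) := hC4b ξ
  have tri : ‖(∫ x, A x) • (1:ℍ) + ((∫ x, B x) • Qi + ((∫ x, Cc x) • Qj + (∫ x, D x) • Qk))‖
      ≤ |∫ x, A x| + (|∫ x, B x| + (|∫ x, Cc x| + |∫ x, D x|)) := by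
    refine (norm_add_le _ _).trans ?_
    have h2 : ‖(∫ x, B x) • Qi + ((∫ x, Cc x) • Qj + (∫ x, D x) • Qk)‖
        ≤ |∫ x, B x| + (|∫ x, Cc x| + |∫ x, D x|) := by
      refine (norm_add_le _ _).trans ?_
      have h3 : ‖(∫ x, Cc x) • Qj + (∫ x, D x) • Qk‖ ≤ |∫ x, Cc x| + |∫ x, D x| := by
        refine (norm_add_le _ _).trans ?_
        rw [norm_smul, norm_smul, norm_Qj, norm_Qk, Real.norm_eq_abs]
        simp
      rw [norm_smul, norm_Qi, Real.norm_eq_abs, mul_one]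
      exact add_le_add_right h3 _
    rw [norm_smul, norm_one, Real.norm_eq_abs, mul_one]
    exact add_le_add_right h2 _
  refine tri.trans ?_
  linarith


lemma gauss2_eq (δ : ℝ) (x : ℝ × ℝ) :
    Real.exp (-(π * δ * (x.1 ^ 2 + x.2 ^ 2))) = gauss2 δ x := by
  rw [gauss2]; congr 1; ring

lemma sqrt4_le (a b c d : ℝ) :
    Real.sqrt (a ^ 2 + b ^ 2 + c ^ 2 + d ^ 2) ≤ |a| + |b| + |c| + |d| := by
  have h : a ^ 2 + b ^ 2 + c ^ 2 + d ^ 2 ≤ (|a| + |b| + |c| + |d|) ^ 2 := by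
    nlinarith [abs_nonneg a, abs_nonneg b, abs_nonneg c, abs_nonneg d, sq_abs a, sq_abs b,
      sq_abs c, sq_abs d, mul_nonneg (abs_nonneg a) (abs_nonneg b),
      mul_nonneg (abs_nonneg a) (abs_nonneg c), mul_nonneg (abs_nonneg a) (abs_nonneg d),
      mul_nonneg (abs_nonneg b) (abs_nonneg c), mul_nonneg (abs_nonneg b) (abs_nonneg d),
      mul_nonneg (abs_nonneg c) (abs_nonneg d)]
  calc Real.sqrt (a ^ 2 + b ^ 2 + c ^ 2 + d ^ 2) ≤ Real.sqrt ((|a| + |b| + |c| + |d|) ^ 2) :=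
        Real.sqrt_le_sqrt h
    _ = |a| + |b| + |c| + |d| := Real.sqrt_sq (by positivity)

lemma qcomp_eq (c : Fin 4 → MvPolynomial (Fin 2) ℝ) (δ : ℝ) (m : Fin 4) :
    qcomp (fun x => qpoly c x * ((Real.exp (-(π * δ * (x.1 ^ 2 + x.2 ^ 2))) : ℝ) : ℍ)) m
      = fun x => ((evp (c m) x * gauss2 δ x : ℝ) : ℍ) := by
  funext x
  have he := gauss2_eq δ x
  fin_cases m <;>
    simp only [qcomp, evp] <;>
    rw [← he] <;>
    norm_cast <;>
    simp only [Quaternion.re_mul, Quaternion.imI_mul, Quaternion.imJ_mul, Quaternion.imK_mul] <;>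
    simp [Quaternion.re_coe, Quaternion.imI_coe, Quaternion.imJ_coe, Quaternion.imK_coe, qpoly, Quaternion.re_mul, Quaternion.imI_mul, Quaternion.imJ_mul, Quaternion.imK_mul, Quaternion.re_one, Quaternion.imI_one, Quaternion.imJ_one, Quaternion.imK_one]

lemma QnormF_bound (δ β : ℝ) (hδ : 0 < δ) (hβ : 0 < β) (hβδ : β < 1 / δ)
    (c : Fin 4 → MvPolynomial (Fin 2) ℝ) :
    ∃ C : ℝ, 0 < C ∧ ∀ ξ : ℝ × ℝ,
      QnormF (fun x => qpoly c x * ((Real.exp (-(π * δ * (x.1 ^ 2 + x.2 ^ 2))) : ℝ) : ℍ)) ξ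
        ≤ C * Real.exp (-(π * β * (ξ.1 ^ 2 + ξ.2 ^ 2))) := by
  choose Cf hCfpos hCfb using fun m : Fin 4 => QFT_scalar_bound δ β hδ hβ hβδ (c m)
  set S : ℝ := ∑ m : Fin 4, Cf m with hS
  have hSpos : 0 < S :=
    Finset.sum_pos (fun i _ => hCfpos i) Finset.univ_nonempty
  have hCfS : ∀ m : Fin 4, Cf m ≤ S := fun m =>
    Finset.single_le_sum (fun i _ => (hCfpos i).le) (Finset.mem_univ m)
  refine ⟨2 * S, by linarith, fun ξ => ?_⟩
  set E : ℝ := Real.exp (-(π * β) * (ξ.1 ^ 2 + ξ.2 ^ 2)) with hE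
  have hEpos : 0 < E := Real.exp_pos _
  have hm : ∀ m : Fin 4,
      ‖QFT (qcomp (fun x => qpoly c x *
          ((Real.exp (-(π * δ * (x.1 ^ 2 + x.2 ^ 2))) : ℝ) : ℍ)) m) ξ‖ ≤ S * E := by
    intro m
    rw [qcomp_eq c δ m]
    exact (hCfb m ξ).trans (mul_le_mul_of_nonneg_right (hCfS m) hEpos.le)
  rw [QnormF]
  have hsum : (∑ m : Fin 4, ‖QFT (qcomp (fun x => qpoly c x *
        ((Real.exp (-(π * δ * (x.1 ^ 2 + x.2 ^ 2))) : ℝ) : ℍ)) m) ξ‖ ^ 2)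
      ≤ ∑ _m : Fin 4, (S * E) ^ 2 := by
    refine Finset.sum_le_sum fun m _ => ?_
    exact pow_le_pow_left₀ (norm_nonneg _) (hm m) 2
  calc Real.sqrt (∑ m : Fin 4, ‖QFT (qcomp (fun x => qpoly c x *
        ((Real.exp (-(π * δ * (x.1 ^ 2 + x.2 ^ 2))) : ℝ) : ℍ)) m) ξ‖ ^ 2)
      ≤ Real.sqrt (∑ _m : Fin 4, (S * E) ^ 2) := Real.sqrt_le_sqrt hsum
    _ = Real.sqrt ((2 * (S * E)) ^ 2) := by
        rw [Finset.sum_const]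
        congr 1
        simp only [Finset.card_univ, Fintype.card_fin, nsmul_eq_mul, Nat.cast_ofNat]
        ring
    _ = 2 * (S * E) := Real.sqrt_sq (by positivity)
    _ = 2 * S * Real.exp (-(π * β * (ξ.1 ^ 2 + ξ.2 ^ 2))) := by
        rw [hE, mul_assoc]
        congr 2
        ring

lemma pointwise_bound (δ α : ℝ) (hδ : 0 < δ) (hα : 0 < α) (hαδ : α < δ)
    (c : Fin 4 → MvPolynomial (Fin 2) ℝ) :
    ∃ C : ℝ, 0 < C ∧ ∀ x : ℝ × ℝ,
      ‖qpoly c x * ((Real.exp (-(π * δ * (x.1 ^ 2 + x.2 ^ 2))) : ℝ) : ℍ)‖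
        ≤ C * Real.exp (-(π * α * (x.1 ^ 2 + x.2 ^ 2))) := by
  have hε : 0 < π * (δ - α) := by have := Real.pi_pos; nlinarith
  choose Cf hCfpos hCfb using fun m : Fin 4 => aux_mvpoly_bound (c m) (π * (δ - α)) hε
  refine ⟨Cf 0 + Cf 1 + Cf 2 + Cf 3, by
    have := hCfpos 0; have := hCfpos 1; have := hCfpos 2; have := hCfpos 3; linarith,
    fun x => ?_⟩
  have hnorm : ‖qpoly c x * ((Real.exp (-(π * δ * (x.1 ^ 2 + x.2 ^ 2))) : ℝ) : ℍ)‖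
      = ‖qpoly c x‖ * Real.exp (-(π * δ * (x.1 ^ 2 + x.2 ^ 2))) := by
    rw [norm_mul, Quaternion.norm_coe, Real.norm_eq_abs,
      _root_.abs_of_nonneg (Real.exp_pos _).le]
  rw [hnorm]
  have hq : ‖qpoly c x‖ ≤ (Cf 0 + Cf 1 + Cf 2 + Cf 3) *
      Real.exp (π * (δ - α) * (x.1 ^ 2 + x.2 ^ 2)) := by
    rw [qnorm_eq]
    have h4 := sqrt4_le (qpoly c x).re (qpoly c x).imI (qpoly c x).imJ (qpoly c x).imK
    refine h4.trans ?_
    have e0 := hCfb 0 x; have e1 := hCfb 1 x; have e2 := hCfb 2 x; have e3 := hCfb 3 x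
    simp only [qpoly] at *
    linarith [e0, e1, e2, e3]
  calc ‖qpoly c x‖ * Real.exp (-(π * δ * (x.1 ^ 2 + x.2 ^ 2)))
      ≤ (Cf 0 + Cf 1 + Cf 2 + Cf 3) * Real.exp (π * (δ - α) * (x.1 ^ 2 + x.2 ^ 2)) *
          Real.exp (-(π * δ * (x.1 ^ 2 + x.2 ^ 2))) :=
        mul_le_mul_of_nonneg_right hq (Real.exp_pos _).le
    _ = (Cf 0 + Cf 1 + Cf 2 + Cf 3) * Real.exp (-(π * α * (x.1 ^ 2 + x.2 ^ 2))) := by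
        rw [mul_assoc, ← Real.exp_add]
        congr 2
        ring


lemma coe_smul_one (r : ℝ) : (r : ℍ) = r • (1 : ℍ) := by
  apply Quaternion.ext <;> simp [Quaternion.re_one, Quaternion.imI_one, Quaternion.imJ_one, Quaternion.imK_one]

lemma qpoly_decomp (c : Fin 4 → MvPolynomial (Fin 2) ℝ) (x : ℝ × ℝ) :
    qpoly c x = evp (c 0) x • (1:ℍ) + evp (c 1) x • Qi + evp (c 2) x • Qj
      + evp (c 3) x • Qk := by
  apply Quaternion.ext <;> simp only [Quaternion.re_add, Quaternion.imI_add, Quaternion.imJ_add, Quaternion.imK_add, Quaternion.re_smul, Quaternion.imI_smul, Quaternion.imJ_smul, Quaternion.imK_smul] <;> simp [qpoly, evp, Qi, Qj, Qk, Quaternion.re_one, Quaternion.imI_one, Quaternion.imJ_one, Quaternion.imK_one]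

lemma qpoly_cont (c : Fin 4 → MvPolynomial (Fin 2) ℝ) : Continuous (qpoly c) := by
  have : (qpoly c) = fun x => evp (c 0) x • (1:ℍ) + evp (c 1) x • Qi + evp (c 2) x • Qj
      + evp (c 3) x • Qk := funext (qpoly_decomp c)
  rw [this]
  exact ((((evp_cont (c 0)).smul continuous_const).add
    ((evp_cont (c 1)).smul continuous_const)).add
    ((evp_cont (c 2)).smul continuous_const)).add
    ((evp_cont (c 3)).smul continuous_const)

lemma F_cont (c : Fin 4 → MvPolynomial (Fin 2) ℝ) (δ : ℝ) :
    Continuous (fun x : ℝ × ℝ =>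
      qpoly c x * ((Real.exp (-(π * δ * (x.1 ^ 2 + x.2 ^ 2))) : ℝ) : ℍ)) := by
  refine (qpoly_cont c).mul ?_
  have : (fun x : ℝ × ℝ => ((Real.exp (-(π * δ * (x.1 ^ 2 + x.2 ^ 2))) : ℝ) : ℍ))
      = fun x => Real.exp (-(π * δ * (x.1 ^ 2 + x.2 ^ 2))) • (1 : ℍ) := by
    funext x; rw [coe_smul_one]
  rw [this]
  exact (by fun_prop : Continuous fun x : ℝ × ℝ =>
    Real.exp (-(π * δ * (x.1 ^ 2 + x.2 ^ 2)))).smul continuous_const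

lemma F_memL2 (c : Fin 4 → MvPolynomial (Fin 2) ℝ) (δ : ℝ) (hδ : 0 < δ) :
    MemLp (fun x : ℝ × ℝ =>
        qpoly c x * ((Real.exp (-(π * δ * (x.1 ^ 2 + x.2 ^ 2))) : ℝ) : ℍ)) 2
      (volume : Measure (ℝ × ℝ)) := by
  rw [memLp_two_iff_integrable_sq_norm (F_cont c δ).aestronglyMeasurable]
  obtain ⟨C, hC, hCb⟩ := pointwise_bound δ (δ/2) hδ (by linarith) (by linarith) c
  have hg : Integrable (fun x : ℝ × ℝ =>
      C ^ 2 * (Real.exp (-(π * δ) * x.1 ^ 2) * Real.exp (-(π * δ) * x.2 ^ 2))) := by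
    rw [Measure.volume_eq_prod]
    exact ((integrable_exp_neg_mul_sq (show (0:ℝ) < π * δ by positivity)).mul_prod
      (integrable_exp_neg_mul_sq (show (0:ℝ) < π * δ by positivity))).const_mul _
  refine hg.mono' ((F_cont c δ).norm.pow 2).aestronglyMeasurable
    (Filter.Eventually.of_forall fun x => ?_)
  rw [Real.norm_eq_abs, _root_.abs_of_nonneg (by positivity)]
  calc ‖qpoly c x * ((Real.exp (-(π * δ * (x.1 ^ 2 + x.2 ^ 2))) : ℝ) : ℍ)‖ ^ 2
      ≤ (C * Real.exp (-(π * (δ/2) * (x.1 ^ 2 + x.2 ^ 2)))) ^ 2 :=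
        pow_le_pow_left₀ (norm_nonneg _) (hCb x) 2
    _ = C ^ 2 * (Real.exp (-(π * δ) * x.1 ^ 2) * Real.exp (-(π * δ) * x.2 ^ 2)) := by
        rw [mul_pow]
        congr 1
        rw [sq, ← Real.exp_add, ← Real.exp_add]
        congr 1
        ring


def cpow (n : ℕ) : Fin 4 → MvPolynomial (Fin 2) ℝ := ![MvPolynomial.X 0 ^ n, 0, 0, 0]

lemma liX : LinearIndependent ℝ (fun n : ℕ => (Polynomial.X : Polynomial ℝ) ^ n) := by
  rw [linearIndependent_iff']
  intro s g hsum i hi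
  have hc := congrArg (fun p => Polynomial.coeff p i) hsum
  simp only [Polynomial.finset_sum_coeff, Polynomial.coeff_smul, Polynomial.coeff_X_pow,
    smul_eq_mul, mul_ite, mul_one, mul_zero, Polynomial.coeff_zero] at hc
  rwa [Finset.sum_ite_eq s i g, if_pos hi] at hc

def evalPolyMap : Polynomial ℝ →ₗ[ℝ] (ℝ → ℝ) where
  toFun p := fun t => p.eval t
  map_add' p q := by funext t; simp
  map_smul' r p := by funext t; simp

lemma li_powers : LinearIndependent ℝ (fun n : ℕ => fun t : ℝ => t ^ n) := by
  have hker : LinearMap.ker evalPolyMap = ⊥ := by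
    rw [LinearMap.ker_eq_bot']
    intro p hp
    exact Polynomial.funext fun r => by
      rw [Polynomial.eval_zero]
      exact congrFun hp r
  have := liX.map' evalPolyMap hker
  have he : (⇑evalPolyMap ∘ fun n : ℕ => (Polynomial.X : Polynomial ℝ) ^ n)
      = fun n : ℕ => fun t : ℝ => t ^ n := by
    funext n t
    simp [evalPolyMap]
  rwa [he] at this

def Tmap (δ₀ : ℝ) : (ℝ × ℝ → ℍ) →ₗ[ℝ] (ℝ → ℝ) where
  toFun f := fun t => (f (t, 0)).re * Real.exp (π * δ₀ * t ^ 2)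
  map_add' f g := by funext t; simp; ring
  map_smul' r f := by funext t; simp [smul_eq_mul]; ring

lemma li_F (δ₀ : ℝ) :
    LinearIndependent ℝ (fun n : ℕ => fun x : ℝ × ℝ =>
      qpoly (cpow n) x * ((Real.exp (-(π * δ₀ * (x.1 ^ 2 + x.2 ^ 2))) : ℝ) : ℍ)) := by
  apply LinearIndependent.of_comp (Tmap δ₀)
  have he : (⇑(Tmap δ₀) ∘ fun n : ℕ => fun x : ℝ × ℝ =>
      qpoly (cpow n) x * ((Real.exp (-(π * δ₀ * (x.1 ^ 2 + x.2 ^ 2))) : ℝ) : ℍ))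
      = fun n : ℕ => fun t : ℝ => t ^ n := by
    funext n t
    show (qpoly (cpow n) (t, 0) * ((Real.exp (-(π * δ₀ * (t ^ 2 + 0 ^ 2))) : ℝ) : ℍ)).re *
      Real.exp (π * δ₀ * t ^ 2) = t ^ n
    have h1 : (qpoly (cpow n) (t, 0)).re = t ^ n := by
      simp [qpoly, cpow]
    have h2 : ∀ q : ℍ, ∀ r : ℝ, (q * (r : ℍ)).re = q.re * r := by
      intro q r
      simp [Quaternion.re_mul]
    rw [h2, h1]
    rw [mul_assoc, ← Real.exp_add, show -(π * δ₀ * (t ^ 2 + 0 ^ 2)) + π * δ₀ * t ^ 2 = 0 by ring,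
      Real.exp_zero, mul_one]
  rw [he]
  exact li_powers


lemma one_le_weight (d : ℝ) (hd : 0 ≤ d) (x : ℝ × ℝ) : 1 ≤ (1 + enorm2 x) ^ d := by
  have h0 : 0 ≤ enorm2 x := Real.sqrt_nonneg _
  exact Real.one_le_rpow (by linarith) hd

lemma bound_lift (C C' E P v : ℝ) (hC : 0 < C) (hCC' : C ≤ C') (hE : 0 < E) (hP : 1 ≤ P)
    (hv : v ≤ C * E) : v ≤ C' * P * E := by
  have hC' : 0 < C' := lt_of_lt_of_le hC hCC'
  have h1 : C * E ≤ C' * E := mul_le_mul_of_nonneg_right hCC' hE.le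
  have h2 : C' * E * 1 ≤ C' * E * P := mul_le_mul_of_nonneg_left hP (mul_pos hC' hE).le
  nlinarith

end HardyAux

/-- Hardy's theorem, subcritical case: αβ < 1 admits infinitely many linearly
independent solutions, including all R(x)e^{-πδ|x|²} with deg R < d. -/
theorem hardy_qft_subcritical (d α β : ℝ) (hd : 0 ≤ d) (hα : 0 < α) (hβ : 0 < β)
    (hαβ : α * β < 1) :
    (∃ F : ℕ → (ℝ × ℝ → ℍ), LinearIndependent ℝ F ∧
      ∀ n : ℕ, MemLp (F n) 2 (volume : Measure (ℝ × ℝ)) ∧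
        ∃ C : ℝ, 0 < C ∧
          (∀ x : ℝ × ℝ, ‖F n x‖ ≤
            C * (1 + enorm2 x) ^ d * Real.exp (-(π * α * (x.1 ^ 2 + x.2 ^ 2)))) ∧
          (∀ y : ℝ × ℝ, QnormF (F n) y ≤
            C * (1 + enorm2 y) ^ d * Real.exp (-(π * β * (y.1 ^ 2 + y.2 ^ 2))))) ∧
    ∀ δ : ℝ, 0 < δ → β < 1 / δ → 1 / δ < 1 / α →
      ∀ c : Fin 4 → MvPolynomial (Fin 2) ℝ, (∀ i, c i ≠ 0 → ((c i).totalDegree : ℝ) < d) →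
        ∃ C : ℝ, 0 < C ∧
          (∀ x : ℝ × ℝ,
            ‖qpoly c x * ((Real.exp (-(π * δ * (x.1 ^ 2 + x.2 ^ 2))) : ℝ) : ℍ)‖ ≤
              C * (1 + enorm2 x) ^ d * Real.exp (-(π * α * (x.1 ^ 2 + x.2 ^ 2)))) ∧
          (∀ y : ℝ × ℝ,
            QnormF (fun x => qpoly c x * ((Real.exp (-(π * δ * (x.1 ^ 2 + x.2 ^ 2))) : ℝ) : ℍ)) y ≤
              C * (1 + enorm2 y) ^ d * Real.exp (-(π * β * (y.1 ^ 2 + y.2 ^ 2)))) := by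
  constructor
  · -- Part 1: infinitely many linearly independent solutions
    have hβα : β < 1 / α := by
      rw [lt_div_iff₀ hα]
      nlinarith
    set s : ℝ := β + 1 / α with hs
    have hspos : 0 < s := by
      have : 0 < 1 / α := by positivity
      rw [hs]; linarith
    set δ₀ : ℝ := 2 / s with hδ₀def
    have hδ₀ : 0 < δ₀ := by positivity
    have hinv : 1 / δ₀ = s / 2 := by
      rw [hδ₀def, one_div_div]
    have hβδ₀ : β < 1 / δ₀ := by
      rw [hinv, hs]; linarith
    have hαδ₀ : α < δ₀ := by
      rw [hδ₀def, lt_div_iff₀ hspos]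
      have : α * s = α * β + 1 := by
        rw [hs, mul_add, mul_one_div_cancel hα.ne']
      rw [this]; nlinarith
    refine ⟨fun n : ℕ => fun x : ℝ × ℝ =>
      qpoly (cpow n) x * ((Real.exp (-(π * δ₀ * (x.1 ^ 2 + x.2 ^ 2))) : ℝ) : ℍ), li_F δ₀, ?_⟩
    intro n
    refine ⟨F_memL2 (cpow n) δ₀ hδ₀, ?_⟩
    obtain ⟨Cp, hCp, hCpb⟩ := pointwise_bound δ₀ α hδ₀ hα hαδ₀ (cpow n)
    obtain ⟨Cq, hCq, hCqb⟩ := QnormF_bound δ₀ β hδ₀ hβ hβδ₀ (cpow n)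
    refine ⟨Cp + Cq, by linarith, fun x => ?_, fun y => ?_⟩
    · exact bound_lift Cp (Cp + Cq) _ _ _ hCp (by linarith) (Real.exp_pos _)
        (one_le_weight d hd x) (hCpb x)
    · exact bound_lift Cq (Cp + Cq) _ _ _ hCq (by linarith) (Real.exp_pos _)
        (one_le_weight d hd y) (hCqb y)
  · -- Part 2: every polynomial times Gaussian works
    intro δ hδ hβδ hδα c _
    have hαδ : α < δ := by
      rw [div_lt_div_iff₀ hδ hα] at hδα
      linarith
    obtain ⟨Cp, hCp, hCpb⟩ := pointwise_bound δ α hδ hα hαδ c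
    obtain ⟨Cq, hCq, hCqb⟩ := QnormF_bound δ β hδ hβ hβδ c
    refine ⟨Cp + Cq, by linarith, fun x => ?_, fun y => ?_⟩
    · exact bound_lift Cp (Cp + Cq) _ _ _ hCp (by linarith) (Real.exp_pos _)
        (one_le_weight d hd x) (hCpb x)
    · exact bound_lift Cq (Cp + Cq) _ _ _ hCq (by linarith) (Real.exp_pos _)
        (one_le_weight d hd y) (hCqb y)
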